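/- Let q ≥ 2, let G be a finite connected (q+1)-regular graph, let m ≥ 1, K ∈ H_m, s₀ ∈ ℝ, and ε₀ = q^{−1/2−is₀}. Then for all integers n ≥ 0 and 0 ≤ k ≤ n: ‖conj(ε₀)^{n−k}·ε₀^{k}·σ^{n−k}ρ^{k}K‖_{H_{m+n}} = ‖K‖_{H_m}; and for all integers 0 ≤ k' ≤ k ≤ n: ⟨conj(ε₀)^{n−k}ε₀^{k}σ^{n−k}ρ^{k}K, conj(ε₀)^{n−k'}ε₀^{k'}σ^{n−k'}ρ^{k'}K⟩_{H_{m+n}} = q^{2is₀(k−k')}·⟨S^{k−k'}K, K⟩_{H_m}. -/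

import Mathlib

open Classical Finset

noncomputable section

def IsNB {V : Type} (G : SimpleGraph V) {k : ℕ} (ω : Fin (k + 1) → V) : Prop :=
  (∀ i j : Fin (k + 1), (j : ℕ) = (i : ℕ) + 1 → G.Adj (ω i) (ω j)) ∧
  (∀ i j : Fin (k + 1), (j : ℕ) = (i : ℕ) + 2 → ω i ≠ ω j)

def nbFinset {V : Type} [Fintype V] (G : SimpleGraph V) (k : ℕ) :
    Finset (Fin (k + 1) → V) :=
  Finset.univ.filter fun ω => IsNB G ω

def RegularOfDegree {V : Type} [Fintype V] (G : SimpleGraph V) (d : ℕ) : Prop :=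
  ∀ x : V, (Finset.univ.filter fun y => G.Adj x y).card = d

/-- The transfer operator `S : H_k → H_k`. -/
def transferOp {V : Type} [Fintype V] (G : SimpleGraph V) (q k : ℕ)
    (K : (Fin (k + 1) → V) → ℂ) : (Fin (k + 1) → V) → ℂ :=
  fun ω => (1 / (q : ℂ)) *
    ∑ y : V, if G.Adj y (ω 0) ∧ y ≠ ω 1
      then K (Fin.cons y fun i : Fin k => ω i.castSucc) else 0

/-- `σ^a ρ^b K` for `K ∈ H_m`: the function on `B_N` (`N = a + m + b`) obtained by evaluating
`K` on the segment `(x_a, …, x_{a+m})` of a path `(x₀, …, x_N)`; the left shift `σ` removes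
initial vertices and the right shift `ρ` removes final ones. -/
def segEval {V : Type} (m N a : ℕ) (h : a + m ≤ N) (K : (Fin (m + 1) → V) → ℂ)
    (ω : Fin (N + 1) → V) : ℂ :=
  K fun i : Fin (m + 1) => ω ⟨a + i.val, by have := i.isLt; omega⟩

/-! ### Auxiliary lemmas -/

lemma isNB_cons_iff {V : Type} (G : SimpleGraph V) {M : ℕ} (y : V) (τ : Fin (M + 2) → V) :
    IsNB G (Fin.cons y τ : Fin (M + 3) → V) ↔ (G.Adj y (τ 0) ∧ y ≠ τ 1) ∧ IsNB G τ := by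
  have hcons : ∀ (k : ℕ) (h : k + 1 < M + 3),
      (Fin.cons y τ : Fin (M + 3) → V) ⟨k + 1, h⟩ = τ ⟨k, by omega⟩ := fun k h => rfl
  constructor
  · rintro ⟨h1, h2⟩
    refine ⟨⟨?_, ?_⟩, fun i j hij => ?_, fun i j hij => ?_⟩
    · have := h1 ⟨0, by omega⟩ ⟨1, by omega⟩ rfl
      rwa [hcons 0] at this
    · have := h2 ⟨0, by omega⟩ ⟨2, by omega⟩ rfl
      rwa [hcons 1] at this
    · have := h1 ⟨i.val + 1, by omega⟩ ⟨j.val + 1, by omega⟩ (by simp [hij])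
      rwa [hcons i.val, hcons j.val, Fin.eta, Fin.eta] at this
    · have := h2 ⟨i.val + 1, by omega⟩ ⟨j.val + 1, by omega⟩ (by simp [hij])
      rwa [hcons i.val, hcons j.val, Fin.eta, Fin.eta] at this
  · rintro ⟨⟨ha, hn⟩, h1, h2⟩
    constructor
    · rintro ⟨iv, hi⟩ ⟨jv, hj⟩ hij
      simp only at hij
      match iv, jv, hij with
      | 0, _, rfl =>
        rw [show ((⟨0, hi⟩ : Fin (M+3)) = 0) from rfl, Fin.cons_zero, hcons 0]
        exact ha
      | iv + 1, _, rfl =>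
        rw [hcons iv, hcons (iv+1)]
        exact h1 ⟨iv, by omega⟩ ⟨iv + 1, by omega⟩ rfl
    · rintro ⟨iv, hi⟩ ⟨jv, hj⟩ hij
      simp only at hij
      match iv, jv, hij with
      | 0, _, rfl =>
        rw [show ((⟨0, hi⟩ : Fin (M+3)) = 0) from rfl, Fin.cons_zero, hcons 1]
        exact hn
      | iv + 1, _, rfl =>
        rw [hcons iv, hcons (iv+2)]
        exact h2 ⟨iv, by omega⟩ ⟨iv + 2, by omega⟩ rfl

lemma isNB_snoc_iff {V : Type} (G : SimpleGraph V) {M : ℕ} (z : V) (τ : Fin (M + 2) → V) :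
    IsNB G (Fin.snoc τ z : Fin (M + 3) → V) ↔
      (G.Adj (τ ⟨M + 1, by omega⟩) z ∧ τ ⟨M, by omega⟩ ≠ z) ∧ IsNB G τ := by
  have hs : ∀ (k : ℕ) (h : k < M + 3) (h' : k < M + 2),
      (Fin.snoc τ z : Fin (M + 3) → V) ⟨k, h⟩ = τ ⟨k, h'⟩ := by
    intro k h h'
    have : (⟨k, h⟩ : Fin (M + 3)) = Fin.castSucc ⟨k, h'⟩ := rfl
    rw [this, Fin.snoc_castSucc]
  have hlast : (Fin.snoc τ z : Fin (M + 3) → V) ⟨M + 2, by omega⟩ = z := by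
    have : (⟨M + 2, by omega⟩ : Fin (M + 3)) = Fin.last (M + 2) := rfl
    rw [this, Fin.snoc_last]
  constructor
  · rintro ⟨h1, h2⟩
    refine ⟨⟨?_, ?_⟩, fun i j hij => ?_, fun i j hij => ?_⟩
    · have := h1 ⟨M + 1, by omega⟩ ⟨M + 2, by omega⟩ rfl
      rwa [hs (M+1) _ (by omega), hlast] at this
    · have := h2 ⟨M, by omega⟩ ⟨M + 2, by omega⟩ rfl
      rwa [hs M _ (by omega), hlast] at this
    · have := h1 ⟨i.val, by omega⟩ ⟨j.val, by omega⟩ (by simp [hij])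
      rwa [hs i.val _ (by omega), hs j.val _ (by omega), Fin.eta, Fin.eta] at this
    · have := h2 ⟨i.val, by omega⟩ ⟨j.val, by omega⟩ (by simp [hij])
      rwa [hs i.val _ (by omega), hs j.val _ (by omega), Fin.eta, Fin.eta] at this
  · rintro ⟨⟨ha, hn⟩, h1, h2⟩
    constructor
    · rintro ⟨iv, hi⟩ ⟨jv, hj⟩ hij
      simp only at hij
      subst hij
      by_cases hlt : iv + 1 < M + 2
      · rw [hs iv _ (by omega), hs (iv+1) _ hlt]
        exact h1 ⟨iv, by omega⟩ ⟨iv + 1, by omega⟩ rfl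
      · have hiv : iv = M + 1 := by omega
        have e : (⟨iv + 1, hj⟩ : Fin (M + 3)) = ⟨M + 2, by omega⟩ := by
          simp only [Fin.mk.injEq]; omega
        rw [hs iv _ (by omega), e, hlast]
        simp only [hiv]
        exact ha
    · rintro ⟨iv, hi⟩ ⟨jv, hj⟩ hij
      simp only at hij
      subst hij
      by_cases hlt : iv + 2 < M + 2
      · rw [hs iv _ (by omega), hs (iv+2) _ hlt]
        exact h2 ⟨iv, by omega⟩ ⟨iv + 2, by omega⟩ rfl
      · have hiv : iv = M := by omega
        have e : (⟨iv + 2, hj⟩ : Fin (M + 3)) = ⟨M + 2, by omega⟩ := by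
          simp only [Fin.mk.injEq]; omega
        rw [hs iv _ (by omega), e, hlast]
        simp only [hiv]
        exact hn

lemma sum_nb_cons {V : Type} [Fintype V] (G : SimpleGraph V) {M : ℕ}
    {β : Type} [AddCommMonoid β] (F : (Fin (M + 3) → V) → β) :
    ∑ ω ∈ nbFinset G (M + 2), F ω
      = ∑ τ ∈ nbFinset G (M + 1), ∑ y : V,
          if G.Adj y (τ 0) ∧ y ≠ τ 1 then F (Fin.cons y τ) else 0 := by
  classical
  have hbij : Function.Bijective (fun p : V × (Fin (M + 2) → V) => (Fin.cons p.1 p.2 : Fin (M + 3) → V)) := by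
    refine (Equiv.mk (fun p : V × (Fin (M + 2) → V) => (Fin.cons p.1 p.2 : Fin (M + 3) → V))
      (fun ω => (ω 0, fun i => ω i.succ)) (fun p => by simp) (fun ω => by
        funext i
        cases i using Fin.cases <;> simp)).bijective
  have key : ∑ ω : Fin (M + 3) → V, (if IsNB G ω then F ω else 0)
      = ∑ p : V × (Fin (M + 2) → V),
          (if IsNB G (Fin.cons p.1 p.2) then F (Fin.cons p.1 p.2) else 0) :=
    (Fintype.sum_bijective _ hbij _ _ (fun p => rfl)).symm
  rw [nbFinset, Finset.sum_filter, nbFinset, Finset.sum_filter, key, Fintype.sum_prod_type,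
    Finset.sum_comm]
  apply Finset.sum_congr rfl
  intro τ _
  by_cases h : IsNB G τ
  · simp only [if_pos h]
    apply Finset.sum_congr rfl
    intro y _
    show (if IsNB G (Fin.cons y τ) then F (Fin.cons y τ) else 0) = _
    rw [isNB_cons_iff]
    simp [h]
  · simp only [if_neg h]
    apply Finset.sum_eq_zero
    intro y _
    show (if IsNB G (Fin.cons y τ) then F (Fin.cons y τ) else 0) = 0
    rw [isNB_cons_iff]
    simp [h]

lemma sum_nb_snoc {V : Type} [Fintype V] (G : SimpleGraph V) {M : ℕ}
    {β : Type} [AddCommMonoid β] (F : (Fin (M + 3) → V) → β) :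
    ∑ ω ∈ nbFinset G (M + 2), F ω
      = ∑ τ ∈ nbFinset G (M + 1), ∑ z : V,
          if G.Adj (τ ⟨M + 1, by omega⟩) z ∧ τ ⟨M, by omega⟩ ≠ z
            then F (Fin.snoc τ z) else 0 := by
  classical
  have hbij : Function.Bijective (fun p : (Fin (M + 2) → V) × V => (Fin.snoc p.1 p.2 : Fin (M + 3) → V)) := by
    refine (Equiv.mk (fun p : (Fin (M + 2) → V) × V => (Fin.snoc p.1 p.2 : Fin (M + 3) → V))
      (fun ω => (fun i => ω i.castSucc, ω (Fin.last (M + 2)))) (fun p => by simp) (fun ω => by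
        funext i
        cases i using Fin.lastCases <;> simp)).bijective
  have key : ∑ ω : Fin (M + 3) → V, (if IsNB G ω then F ω else 0)
      = ∑ p : (Fin (M + 2) → V) × V,
          (if IsNB G (Fin.snoc p.1 p.2) then F (Fin.snoc p.1 p.2) else 0) :=
    (Fintype.sum_bijective _ hbij _ _ (fun p => rfl)).symm
  rw [nbFinset, Finset.sum_filter, nbFinset, Finset.sum_filter, key, Fintype.sum_prod_type]
  apply Finset.sum_congr rfl
  intro τ _
  by_cases h : IsNB G τ
  · simp only [if_pos h]
    apply Finset.sum_congr rfl
    intro z _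
    show (if IsNB G (Fin.snoc τ z) then F (Fin.snoc τ z) else 0) = _
    rw [isNB_snoc_iff]
    simp [h]
  · simp only [if_neg h]
    apply Finset.sum_eq_zero
    intro z _
    show (if IsNB G (Fin.snoc τ z) then F (Fin.snoc τ z) else 0) = 0
    rw [isNB_snoc_iff]
    simp [h]

section Combinatorics

variable {V : Type} [Fintype V] {G : SimpleGraph V} {q : ℕ}

lemma card_left (hreg : RegularOfDegree G (q + 1)) {M : ℕ} {τ : Fin (M + 2) → V}
    (hτ : IsNB G τ) :
    (Finset.univ.filter fun y => G.Adj y (τ 0) ∧ y ≠ τ 1).card = q := by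
  have hadj : G.Adj (τ 0) (τ 1) := hτ.1 0 1 (by simp)
  have hset : (Finset.univ.filter fun y => G.Adj y (τ 0) ∧ y ≠ τ 1)
      = (Finset.univ.filter fun y => G.Adj (τ 0) y).erase (τ 1) := by
    ext y
    simp only [Finset.mem_filter, Finset.mem_erase, Finset.mem_univ, true_and]
    rw [G.adj_comm]
    tauto
  rw [hset, Finset.card_erase_of_mem (by simp [hadj]), hreg (τ 0)]
  omega

lemma card_right (hreg : RegularOfDegree G (q + 1)) {M : ℕ} {τ : Fin (M + 2) → V}
    (hτ : IsNB G τ) :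
    (Finset.univ.filter fun z =>
        G.Adj (τ ⟨M + 1, by omega⟩) z ∧ τ ⟨M, by omega⟩ ≠ z).card = q := by
  have hadj : G.Adj (τ ⟨M, by omega⟩) (τ ⟨M + 1, by omega⟩) :=
    hτ.1 ⟨M, by omega⟩ ⟨M + 1, by omega⟩ rfl
  have hset : (Finset.univ.filter fun z =>
        G.Adj (τ ⟨M + 1, by omega⟩) z ∧ τ ⟨M, by omega⟩ ≠ z)
      = (Finset.univ.filter fun z => G.Adj (τ ⟨M + 1, by omega⟩) z).erase (τ ⟨M, by omega⟩) := by
    ext z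
    simp only [Finset.mem_filter, Finset.mem_erase, Finset.mem_univ, true_and]
    constructor
    · rintro ⟨h1, h2⟩; exact ⟨fun h => h2 h.symm, h1⟩
    · rintro ⟨h1, h2⟩; exact ⟨h2, fun h => h1 h.symm⟩
  rw [hset, Finset.card_erase_of_mem (by simp [hadj.symm]), hreg]
  omega

variable {β : Type} [AddCommMonoid β]

lemma sum_drop_left (hreg : RegularOfDegree G (q + 1)) {N : ℕ} (hN : 1 ≤ N)
    (f : (Fin (N + 1) → V) → β) :
    ∑ ω ∈ nbFinset G (N + 1), f (fun i : Fin (N + 1) => ω i.succ)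
      = q • ∑ τ ∈ nbFinset G N, f τ := by
  obtain ⟨M, rfl⟩ : ∃ M, N = M + 1 := ⟨N - 1, by omega⟩
  rw [sum_nb_cons G (fun ω => f (fun i : Fin (M + 2) => ω i.succ)), Finset.smul_sum]
  apply Finset.sum_congr rfl
  intro τ hτ
  have hτ' : IsNB G τ := by
    simpa [nbFinset] using hτ
  have hval : ∀ y : V, f (fun i : Fin (M + 2) => (Fin.cons y τ : Fin (M + 3) → V) i.succ) = f τ := by
    intro y
    congr 1
  calc (∑ y : V, if G.Adj y (τ 0) ∧ y ≠ τ 1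
          then f (fun i : Fin (M + 2) => (Fin.cons y τ : Fin (M + 3) → V) i.succ) else 0)
      = ∑ y : V, if G.Adj y (τ 0) ∧ y ≠ τ 1 then f τ else 0 := by
        apply Finset.sum_congr rfl
        intro y _
        rw [hval y]
    _ = (Finset.univ.filter fun y => G.Adj y (τ 0) ∧ y ≠ τ 1).card • f τ := by
        rw [← Finset.sum_filter, Finset.sum_const]
    _ = q • f τ := by rw [card_left hreg hτ']

lemma sum_drop_right (hreg : RegularOfDegree G (q + 1)) {N : ℕ} (hN : 1 ≤ N)
    (f : (Fin (N + 1) → V) → β) :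
    ∑ ω ∈ nbFinset G (N + 1), f (fun i : Fin (N + 1) => ω i.castSucc)
      = q • ∑ τ ∈ nbFinset G N, f τ := by
  obtain ⟨M, rfl⟩ : ∃ M, N = M + 1 := ⟨N - 1, by omega⟩
  rw [sum_nb_snoc G (fun ω => f (fun i : Fin (M + 2) => ω i.castSucc)), Finset.smul_sum]
  apply Finset.sum_congr rfl
  intro τ hτ
  have hτ' : IsNB G τ := by
    simpa [nbFinset] using hτ
  have hval : ∀ z : V, f (fun i : Fin (M + 2) => (Fin.snoc τ z : Fin (M + 3) → V) i.castSucc) = f τ := by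
    intro z
    congr 1
    funext i
    rw [Fin.snoc_castSucc]
  calc (∑ z : V, if G.Adj (τ ⟨M + 1, by omega⟩) z ∧ τ ⟨M, by omega⟩ ≠ z
          then f (fun i : Fin (M + 2) => (Fin.snoc τ z : Fin (M + 3) → V) i.castSucc) else 0)
      = ∑ z : V, if G.Adj (τ ⟨M + 1, by omega⟩) z ∧ τ ⟨M, by omega⟩ ≠ z then f τ else 0 := by
        apply Finset.sum_congr rfl
        intro z _
        rw [hval z]
    _ = (Finset.univ.filter fun z => G.Adj (τ ⟨M + 1, by omega⟩) z ∧ τ ⟨M, by omega⟩ ≠ z).card • f τ := by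
        rw [← Finset.sum_filter, Finset.sum_const]
    _ = q • f τ := by rw [card_right hreg hτ']

lemma sum_strip_right (hreg : RegularOfDegree G (q + 1)) {N : ℕ} (hN : 1 ≤ N) (k : ℕ)
    (f : (Fin (N + 1) → V) → β) :
    ∑ ω ∈ nbFinset G (N + k), f (fun i : Fin (N + 1) => ω ⟨i.val, by omega⟩)
      = q ^ k • ∑ τ ∈ nbFinset G N, f τ := by
  induction k with
  | zero =>
    rw [pow_zero, one_smul]
    apply Finset.sum_congr rfl
    intro ω _
    congr 1
  | succ k ih =>
    have step := sum_drop_right hreg (N := N + k) (by omega)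
      (fun σ : Fin (N + k + 1) → V => f (fun i : Fin (N + 1) => σ ⟨i.val, by omega⟩))
    calc ∑ ω ∈ nbFinset G (N + (k + 1)), f (fun i : Fin (N + 1) => ω ⟨i.val, by omega⟩)
        = q • ∑ σ ∈ nbFinset G (N + k), f (fun i : Fin (N + 1) => σ ⟨i.val, by omega⟩) := step
      _ = q • (q ^ k • ∑ τ ∈ nbFinset G N, f τ) := by rw [ih]
      _ = q ^ (k + 1) • ∑ τ ∈ nbFinset G N, f τ := by
          rw [smul_smul, pow_succ']

lemma sum_strip_left (hreg : RegularOfDegree G (q + 1)) {N : ℕ} (hN : 1 ≤ N) (l : ℕ)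
    (f : (Fin (N + 1) → V) → β) :
    ∑ ω ∈ nbFinset G (N + l), f (fun i : Fin (N + 1) => ω ⟨l + i.val, by omega⟩)
      = q ^ l • ∑ τ ∈ nbFinset G N, f τ := by
  induction l with
  | zero =>
    rw [pow_zero, one_smul]
    apply Finset.sum_congr rfl
    intro ω _
    congr 1
    funext i
    exact congrArg ω (by simp)
  | succ l ih =>
    have step := sum_drop_left hreg (N := N + l) (by omega)
      (fun σ : Fin (N + l + 1) → V => f (fun i : Fin (N + 1) => σ ⟨l + i.val, by omega⟩))
    calc ∑ ω ∈ nbFinset G (N + (l + 1)), f (fun i : Fin (N + 1) => ω ⟨(l + 1) + i.val, by omega⟩)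
        = ∑ ω ∈ nbFinset G (N + l + 1),
            f (fun i : Fin (N + 1) => (fun j : Fin (N + l + 1) => ω j.succ) ⟨l + i.val, by omega⟩) := by
          apply Finset.sum_congr rfl
          intro ω _
          exact congrArg f (funext fun i => congrArg ω (by
            apply Fin.ext
            simp only [Fin.val_succ]
            omega))
      _ = q • ∑ σ ∈ nbFinset G (N + l), f (fun i : Fin (N + 1) => σ ⟨l + i.val, by omega⟩) := step
      _ = q • (q ^ l • ∑ τ ∈ nbFinset G N, f τ) := by rw [ih]
      _ = q ^ (l + 1) • ∑ τ ∈ nbFinset G N, f τ := by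
          rw [smul_smul, pow_succ']

lemma nb_sum_cast {a b : ℕ} (h : a = b) (F : (Fin (b + 1) → V) → β) :
    ∑ ω ∈ nbFinset G b, F ω
      = ∑ ω ∈ nbFinset G a, F (fun i : Fin (b + 1) => ω ⟨i.val, by omega⟩) := by
  subst h
  apply Finset.sum_congr rfl
  intro ω _
  exact congrArg F (funext fun i => rfl)

lemma sum_window (hreg : RegularOfDegree G (q + 1)) {N : ℕ} (hN : 1 ≤ N) (l k : ℕ)
    (f : (Fin (N + 1) → V) → β) :
    ∑ ω ∈ nbFinset G (l + N + k), f (fun i : Fin (N + 1) => ω ⟨l + i.val, by omega⟩)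
      = q ^ (l + k) • ∑ τ ∈ nbFinset G N, f τ := by
  have h1 := sum_strip_right hreg (N := l + N) (by omega) k
    (fun σ : Fin (l + N + 1) → V => f (fun i : Fin (N + 1) => σ ⟨l + i.val, by omega⟩))
  calc ∑ ω ∈ nbFinset G (l + N + k), f (fun i : Fin (N + 1) => ω ⟨l + i.val, by omega⟩)
      = q ^ k • ∑ σ ∈ nbFinset G (l + N), f (fun i : Fin (N + 1) => σ ⟨l + i.val, by omega⟩) := h1
    _ = q ^ k • ∑ ω ∈ nbFinset G (N + l), f (fun i : Fin (N + 1) => ω ⟨l + i.val, by omega⟩) := by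
        exact congrArg (fun t => q ^ k • t)
          (nb_sum_cast (show N + l = l + N by omega)
            (fun σ : Fin (l + N + 1) → V => f (fun i : Fin (N + 1) => σ ⟨l + i.val, by omega⟩)))
    _ = q ^ k • (q ^ l • ∑ τ ∈ nbFinset G N, f τ) := by
        rw [sum_strip_left hreg hN l f]
    _ = q ^ (l + k) • ∑ τ ∈ nbFinset G N, f τ := by
        rw [smul_smul, ← pow_add, Nat.add_comm k l]

lemma sum_nb_cons' {N : ℕ} (hN : 1 ≤ N)
    (F : (Fin (N + 2) → V) → β) :
    ∑ ω ∈ nbFinset G (N + 1), F ω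
      = ∑ τ ∈ nbFinset G N, ∑ y : V,
          if G.Adj y (τ 0) ∧ y ≠ τ 1 then F (Fin.cons y τ) else 0 := by
  obtain ⟨M, rfl⟩ : ∃ M, N = M + 1 := ⟨N - 1, by omega⟩
  exact sum_nb_cons G F

lemma sum_core (hq : 2 ≤ q) (hreg : RegularOfDegree G (q + 1)) {m : ℕ} (hm : 1 ≤ m)
    (d : ℕ) (K₁ K₂ : (Fin (m + 1) → V) → ℂ) :
    ∑ ω ∈ nbFinset G (m + d),
        (starRingEnd ℂ) (K₁ (fun i : Fin (m + 1) => ω ⟨i.val, by omega⟩))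
          * K₂ (fun i : Fin (m + 1) => ω ⟨d + i.val, by omega⟩)
      = (q : ℂ) ^ d * ∑ τ ∈ nbFinset G m,
          (starRingEnd ℂ) ((transferOp G q m)^[d] K₁ τ) * K₂ τ := by
  have hq0 : (q : ℂ) ≠ 0 := by
    simp only [ne_eq, Nat.cast_eq_zero]
    omega
  induction d generalizing K₁ with
  | zero =>
    rw [pow_zero, one_mul]
    apply Finset.sum_congr rfl
    intro ω _
    rw [Function.iterate_zero_apply]
    congr 1
    congr 1
    funext i
    exact congrArg ω (by apply Fin.ext; simp)
  | succ d ih =>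
    have expand : (∑ ω ∈ nbFinset G (m + (d + 1)),
        (starRingEnd ℂ) (K₁ (fun i : Fin (m + 1) => ω ⟨i.val, by omega⟩))
          * K₂ (fun i : Fin (m + 1) => ω ⟨(d + 1) + i.val, by omega⟩))
        = ∑ τ ∈ nbFinset G (m + d), ∑ y : V,
            if G.Adj y (τ 0) ∧ y ≠ τ 1
              then (starRingEnd ℂ)
                  (K₁ (fun i : Fin (m + 1) => (Fin.cons y τ : Fin (m + d + 2) → V) ⟨i.val, by omega⟩))
                * K₂ (fun i : Fin (m + 1) =>
                    (Fin.cons y τ : Fin (m + d + 2) → V) ⟨(d + 1) + i.val, by omega⟩)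
              else 0 :=
      sum_nb_cons' (by omega) (fun ω : Fin (m + d + 2) → V =>
        (starRingEnd ℂ) (K₁ (fun i : Fin (m + 1) => ω ⟨i.val, by omega⟩))
          * K₂ (fun i : Fin (m + 1) => ω ⟨(d + 1) + i.val, by omega⟩))
    rw [expand]
    have key : ∀ τ ∈ nbFinset G (m + d),
        (∑ y : V, if G.Adj y (τ 0) ∧ y ≠ τ 1
            then (starRingEnd ℂ)
                (K₁ (fun i : Fin (m + 1) => (Fin.cons y τ : Fin (m + d + 2) → V) ⟨i.val, by omega⟩))
              * K₂ (fun i : Fin (m + 1) =>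
                  (Fin.cons y τ : Fin (m + d + 2) → V) ⟨(d + 1) + i.val, by omega⟩)
            else 0)
          = (q : ℂ) * ((starRingEnd ℂ)
              ((transferOp G q m K₁) (fun i : Fin (m + 1) => τ ⟨i.val, by omega⟩))
            * K₂ (fun i : Fin (m + 1) => τ ⟨d + i.val, by omega⟩)) := by
      intro τ hτ
      set τ' : Fin (m + 1) → V := fun i : Fin (m + 1) => τ ⟨i.val, by omega⟩ with hτ'def
      have e0 : τ' 0 = τ 0 := rfl
      have e1 : τ' 1 = τ 1 := by
        apply congrArg τ
        apply Fin.ext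
        show ((1 : Fin (m + 1)) : ℕ) = ((1 : Fin (m + d + 1)) : ℕ)
        rw [Fin.val_one', Fin.val_one', Nat.mod_eq_of_lt (by omega), Nat.mod_eq_of_lt (by omega)]
      have eq1 : ∀ y : V, (fun i : Fin (m + 1) =>
          (Fin.cons y τ : Fin (m + d + 2) → V) ⟨i.val, by omega⟩)
          = Fin.cons y (fun i : Fin m => τ' i.castSucc) := by
        intro y
        funext i
        cases i using Fin.cases with
        | zero => rfl
        | succ j => rfl
      have eq2 : ∀ y : V, (fun i : Fin (m + 1) =>
          (Fin.cons y τ : Fin (m + d + 2) → V) ⟨(d + 1) + i.val, by omega⟩)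
          = fun i : Fin (m + 1) => τ ⟨d + i.val, by omega⟩ := by
        intro y
        funext i
        have e : (⟨(d + 1) + i.val, by omega⟩ : Fin (m + d + 2))
            = Fin.succ ⟨d + i.val, by omega⟩ := by
          apply Fin.ext
          simp only [Fin.val_succ]
          omega
        rw [e, Fin.cons_succ]
      have hSq : (q : ℂ) * transferOp G q m K₁ τ'
          = ∑ y : V, if G.Adj y (τ' 0) ∧ y ≠ τ' 1
              then K₁ (Fin.cons y fun i : Fin m => τ' i.castSucc) else 0 := by
        rw [transferOp, ← mul_assoc, mul_one_div, div_self hq0, one_mul]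
      calc (∑ y : V, if G.Adj y (τ 0) ∧ y ≠ τ 1
            then (starRingEnd ℂ)
                (K₁ (fun i : Fin (m + 1) => (Fin.cons y τ : Fin (m + d + 2) → V) ⟨i.val, by omega⟩))
              * K₂ (fun i : Fin (m + 1) =>
                  (Fin.cons y τ : Fin (m + d + 2) → V) ⟨(d + 1) + i.val, by omega⟩)
            else 0)
          = ∑ y : V, (if G.Adj y (τ' 0) ∧ y ≠ τ' 1
              then (starRingEnd ℂ) (K₁ (Fin.cons y fun i : Fin m => τ' i.castSucc)) else 0)
              * K₂ (fun i : Fin (m + 1) => τ ⟨d + i.val, by omega⟩) := by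
            apply Finset.sum_congr rfl
            intro y _
            rw [e0, e1, eq1 y, eq2 y, ite_mul, zero_mul]
        _ = (∑ y : V, if G.Adj y (τ' 0) ∧ y ≠ τ' 1
              then (starRingEnd ℂ) (K₁ (Fin.cons y fun i : Fin m => τ' i.castSucc)) else 0)
              * K₂ (fun i : Fin (m + 1) => τ ⟨d + i.val, by omega⟩) := by
            rw [Finset.sum_mul]
        _ = (starRingEnd ℂ) (∑ y : V, if G.Adj y (τ' 0) ∧ y ≠ τ' 1
              then K₁ (Fin.cons y fun i : Fin m => τ' i.castSucc) else 0)
              * K₂ (fun i : Fin (m + 1) => τ ⟨d + i.val, by omega⟩) := by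
            rw [map_sum]
            congr 1
            apply Finset.sum_congr rfl
            intro y _
            rw [apply_ite (starRingEnd ℂ), map_zero]
        _ = (starRingEnd ℂ) ((q : ℂ) * transferOp G q m K₁ τ')
              * K₂ (fun i : Fin (m + 1) => τ ⟨d + i.val, by omega⟩) := by rw [hSq]
        _ = (q : ℂ) * ((starRingEnd ℂ) (transferOp G q m K₁ τ')
              * K₂ (fun i : Fin (m + 1) => τ ⟨d + i.val, by omega⟩)) := by
            rw [map_mul, Complex.conj_natCast, mul_assoc]
    rw [Finset.sum_congr rfl key, ← Finset.mul_sum,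
      ih (transferOp G q m K₁)]
    rw [← mul_assoc, ← pow_succ']
    congr 1

end Combinatorics

/-! ### Scalar lemmas -/

lemma conj_eps (q : ℕ) (hq : 2 ≤ q) (s₀ : ℝ) :
    (starRingEnd ℂ) ((q : ℂ) ^ (-(1/2 : ℂ) - Complex.I * (s₀ : ℂ)))
      = (q : ℂ) ^ (-(1/2 : ℂ) + Complex.I * (s₀ : ℂ)) := by
  have harg : (q : ℂ).arg ≠ Real.pi := by
    rw [Complex.natCast_arg]
    exact (Real.pi_ne_zero).symm
  have h := Complex.conj_cpow (q : ℂ) (-(1/2 : ℂ) + Complex.I * (s₀ : ℂ)) harg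
  rw [Complex.conj_natCast] at h
  have hcw : (starRingEnd ℂ) (-(1/2 : ℂ) + Complex.I * (s₀ : ℂ))
      = -(1/2 : ℂ) - Complex.I * (s₀ : ℂ) := by
    simp [Complex.ext_iff]
  rw [hcw] at h
  exact h.symm

lemma eps_mul_conj (q : ℕ) (hq : 2 ≤ q) (s₀ : ℝ) :
    ((q : ℂ) ^ (-(1/2 : ℂ) - Complex.I * (s₀ : ℂ)))
      * (starRingEnd ℂ) ((q : ℂ) ^ (-(1/2 : ℂ) - Complex.I * (s₀ : ℂ))) * (q : ℂ) = 1 := by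
  have hq0 : (q : ℂ) ≠ 0 := by
    simp only [ne_eq, Nat.cast_eq_zero]; omega
  rw [conj_eps q hq s₀, ← Complex.cpow_add _ _ hq0]
  have : (-(1/2 : ℂ) - Complex.I * (s₀ : ℂ)) + (-(1/2 : ℂ) + Complex.I * (s₀ : ℂ)) = -1 := by
    ring
  rw [this]
  rw [show (-1 : ℂ) = (-1 : ℤ) by norm_num, Complex.cpow_intCast]
  field_simp

lemma conj_eps_sq (q : ℕ) (hq : 2 ≤ q) (s₀ : ℝ) :
    ((starRingEnd ℂ) ((q : ℂ) ^ (-(1/2 : ℂ) - Complex.I * (s₀ : ℂ)))) ^ 2 * (q : ℂ)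
      = (q : ℂ) ^ (2 * Complex.I * (s₀ : ℂ)) := by
  have hq0 : (q : ℂ) ≠ 0 := by
    simp only [ne_eq, Nat.cast_eq_zero]; omega
  rw [conj_eps q hq s₀]
  calc ((q : ℂ) ^ (-(1/2 : ℂ) + Complex.I * (s₀ : ℂ))) ^ 2 * (q : ℂ)
      = (q : ℂ) ^ (2 * (-(1/2 : ℂ) + Complex.I * (s₀ : ℂ))) * (q : ℂ) ^ (1 : ℂ) := by
        rw [← Complex.cpow_ofNat_mul, Complex.cpow_one]
    _ = (q : ℂ) ^ (2 * (-(1/2 : ℂ) + Complex.I * (s₀ : ℂ)) + 1) := (Complex.cpow_add _ _ hq0).symm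
    _ = (q : ℂ) ^ (2 * Complex.I * (s₀ : ℂ)) := by
        congr 1
        ring

lemma mu_pow (q : ℕ) (s₀ : ℝ) (d : ℕ) :
    ((q : ℂ) ^ (2 * Complex.I * (s₀ : ℂ))) ^ d = (q : ℂ) ^ (2 * Complex.I * (s₀ : ℂ) * (d : ℂ)) :=
  (Complex.cpow_mul_nat _ _ _).symm

lemma abs_eps_sq (q : ℕ) (hq : 2 ≤ q) (s₀ : ℝ) :
    ‖(q : ℂ) ^ (-(1/2 : ℂ) - Complex.I * (s₀ : ℂ))‖ ^ 2 = (q : ℝ)⁻¹ := by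
  have hq0 : (0 : ℝ) < q := by positivity
  have : ((q : ℂ)) = (((q : ℝ)) : ℂ) := by norm_cast
  rw [this, Complex.norm_cpow_eq_rpow_re_of_pos hq0]
  have hre : (-(1/2 : ℂ) - Complex.I * (s₀ : ℂ)).re = -(1/2 : ℝ) := by
    simp
  rw [hre, ← Real.rpow_natCast ((q:ℝ) ^ (-(1/2:ℝ))) 2, ← Real.rpow_mul (le_of_lt hq0)]
  norm_num
  rw [Real.rpow_neg_one]

/-- Lemma 7 of the paper: the basic norm and inner-product identities for the twisted shifts
`conj(ε₀)^{n-k} ε₀^k σ^{n-k} ρ^k` on `H_m`, with `ε₀ = q^{-1/2 - i s₀}`.  In the second identity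
`k = k' + d` and `n = l + k' + d`, so that `σ^{n-k} ρ^k = σ^l ρ^{k'+d}` and
`σ^{n-k'} ρ^{k'} = σ^{l+d} ρ^{k'}`. -/
theorem twisted_shift_identities
    (q m : ℕ) (hq : 2 ≤ q) (hm : 1 ≤ m)
    (V : Type) [Fintype V] (G : SimpleGraph V)
    (hconn : G.Connected) (hreg : RegularOfDegree G (q + 1))
    (K : (Fin (m + 1) → V) → ℂ) (s₀ : ℝ) :
    (∀ l k : ℕ,
      (1 / (Fintype.card V : ℝ)) * ∑ ω ∈ nbFinset G (m + l + k),
          ‖(starRingEnd ℂ) ((q : ℂ) ^ (-(1/2 : ℂ) - Complex.I * (s₀ : ℂ))) ^ l *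
            ((q : ℂ) ^ (-(1/2 : ℂ) - Complex.I * (s₀ : ℂ))) ^ k *
            segEval m (m + l + k) l (by omega) K ω‖ ^ 2
        = (1 / (Fintype.card V : ℝ)) * ∑ ω ∈ nbFinset G m, ‖K ω‖ ^ 2) ∧
    (∀ l k' d : ℕ,
      (1 / (Fintype.card V : ℂ)) * ∑ ω ∈ nbFinset G (m + l + k' + d),
          (starRingEnd ℂ)
              ((starRingEnd ℂ) ((q : ℂ) ^ (-(1/2 : ℂ) - Complex.I * (s₀ : ℂ))) ^ l *
               ((q : ℂ) ^ (-(1/2 : ℂ) - Complex.I * (s₀ : ℂ))) ^ (k' + d) *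
               segEval m (m + l + k' + d) l (by omega) K ω) *
            ((starRingEnd ℂ) ((q : ℂ) ^ (-(1/2 : ℂ) - Complex.I * (s₀ : ℂ))) ^ (l + d) *
             ((q : ℂ) ^ (-(1/2 : ℂ) - Complex.I * (s₀ : ℂ))) ^ k' *
             segEval m (m + l + k' + d) (l + d) (by omega) K ω)
        = (q : ℂ) ^ (2 * Complex.I * (s₀ : ℂ) * (d : ℂ)) *
            ((1 / (Fintype.card V : ℂ)) * ∑ ω ∈ nbFinset G m,
              (starRingEnd ℂ) ((transferOp G q m)^[d] K ω) * K ω)) := by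
  have hq0R : (q : ℝ) ≠ 0 := by
    simp only [ne_eq, Nat.cast_eq_zero]; omega
  constructor
  · -- Part 1
    intro l k
    congr 1
    have habs : ∀ z : ℂ,
        ‖(starRingEnd ℂ) ((q : ℂ) ^ (-(1/2 : ℂ) - Complex.I * (s₀ : ℂ))) ^ l *
            ((q : ℂ) ^ (-(1/2 : ℂ) - Complex.I * (s₀ : ℂ))) ^ k * z‖ ^ 2
          = ((q : ℝ)⁻¹) ^ (l + k) * ‖z‖ ^ 2 := by
      intro z
      rw [norm_mul, norm_mul, norm_pow, norm_pow, Complex.norm_conj, mul_pow, mul_pow,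
        ← pow_mul, ← pow_mul, mul_comm l 2, mul_comm k 2, pow_mul, pow_mul,
        abs_eps_sq q hq s₀, mul_assoc, ← mul_assoc, ← pow_add]
    calc ∑ ω ∈ nbFinset G (m + l + k),
          ‖(starRingEnd ℂ) ((q : ℂ) ^ (-(1/2 : ℂ) - Complex.I * (s₀ : ℂ))) ^ l *
            ((q : ℂ) ^ (-(1/2 : ℂ) - Complex.I * (s₀ : ℂ))) ^ k *
            segEval m (m + l + k) l (by omega) K ω‖ ^ 2
        = ∑ ω ∈ nbFinset G (m + l + k),
            ((q : ℝ)⁻¹) ^ (l + k) * ‖segEval m (m + l + k) l (by omega) K ω‖ ^ 2 :=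
          Finset.sum_congr rfl (fun ω _ => habs _)
      _ = ((q : ℝ)⁻¹) ^ (l + k) * ∑ ω ∈ nbFinset G (m + l + k),
            ‖segEval m (m + l + k) l (by omega) K ω‖ ^ 2 := by
          rw [Finset.mul_sum]
      _ = ((q : ℝ)⁻¹) ^ (l + k) * ∑ ω ∈ nbFinset G (l + m + k),
            ‖K (fun i : Fin (m + 1) => ω ⟨l + i.val, by omega⟩)‖ ^ 2 :=
          congrArg _ (nb_sum_cast (show l + m + k = m + l + k by omega)
            (fun ω => ‖segEval m (m + l + k) l (by omega) K ω‖ ^ 2))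
      _ = ((q : ℝ)⁻¹) ^ (l + k) * (q ^ (l + k) •
            ∑ τ ∈ nbFinset G m, ‖K τ‖ ^ 2) :=
          congrArg _ (sum_window hreg (by omega) l k
            (fun τ : Fin (m + 1) → V => ‖K τ‖ ^ 2))
      _ = ∑ ω ∈ nbFinset G m, ‖K ω‖ ^ 2 := by
          rw [nsmul_eq_mul, Nat.cast_pow, ← mul_assoc, ← mul_pow,
            inv_mul_cancel₀ hq0R, one_pow, one_mul]
  · -- Part 2
    intro l k' d
    rw [← mu_pow q s₀ d]
    have hsummand : ∀ X Y : ℂ,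
        (starRingEnd ℂ) ((starRingEnd ℂ) ((q : ℂ) ^ (-(1/2 : ℂ) - Complex.I * (s₀ : ℂ))) ^ l *
            ((q : ℂ) ^ (-(1/2 : ℂ) - Complex.I * (s₀ : ℂ))) ^ (k' + d) * X) *
          ((starRingEnd ℂ) ((q : ℂ) ^ (-(1/2 : ℂ) - Complex.I * (s₀ : ℂ))) ^ (l + d) *
            ((q : ℂ) ^ (-(1/2 : ℂ) - Complex.I * (s₀ : ℂ))) ^ k' * Y)
        = (((q : ℂ) ^ (-(1/2 : ℂ) - Complex.I * (s₀ : ℂ))) ^ l *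
            ((starRingEnd ℂ) ((q : ℂ) ^ (-(1/2 : ℂ) - Complex.I * (s₀ : ℂ)))) ^ (k' + d) *
            (((starRingEnd ℂ) ((q : ℂ) ^ (-(1/2 : ℂ) - Complex.I * (s₀ : ℂ)))) ^ (l + d) *
              ((q : ℂ) ^ (-(1/2 : ℂ) - Complex.I * (s₀ : ℂ))) ^ k')) *
            ((starRingEnd ℂ) X * Y) := by
      intro X Y
      rw [map_mul, map_mul, map_pow, map_pow, Complex.conj_conj]
      ring
    have hC : (((q : ℂ) ^ (-(1/2 : ℂ) - Complex.I * (s₀ : ℂ))) ^ l *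
          ((starRingEnd ℂ) ((q : ℂ) ^ (-(1/2 : ℂ) - Complex.I * (s₀ : ℂ)))) ^ (k' + d) *
          (((starRingEnd ℂ) ((q : ℂ) ^ (-(1/2 : ℂ) - Complex.I * (s₀ : ℂ)))) ^ (l + d) *
            ((q : ℂ) ^ (-(1/2 : ℂ) - Complex.I * (s₀ : ℂ))) ^ k')) *
          (q : ℂ) ^ (l + k') * (q : ℂ) ^ d
        = ((q : ℂ) ^ (2 * Complex.I * (s₀ : ℂ))) ^ d := by
      have h1 := eps_mul_conj q hq s₀
      have h2 := conj_eps_sq q hq s₀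
      calc (((q : ℂ) ^ (-(1/2 : ℂ) - Complex.I * (s₀ : ℂ))) ^ l *
          ((starRingEnd ℂ) ((q : ℂ) ^ (-(1/2 : ℂ) - Complex.I * (s₀ : ℂ)))) ^ (k' + d) *
          (((starRingEnd ℂ) ((q : ℂ) ^ (-(1/2 : ℂ) - Complex.I * (s₀ : ℂ)))) ^ (l + d) *
            ((q : ℂ) ^ (-(1/2 : ℂ) - Complex.I * (s₀ : ℂ))) ^ k')) *
          (q : ℂ) ^ (l + k') * (q : ℂ) ^ d
          = (((q : ℂ) ^ (-(1/2 : ℂ) - Complex.I * (s₀ : ℂ))) *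
              (starRingEnd ℂ) ((q : ℂ) ^ (-(1/2 : ℂ) - Complex.I * (s₀ : ℂ))) * (q : ℂ)) ^ (l + k') *
            (((starRingEnd ℂ) ((q : ℂ) ^ (-(1/2 : ℂ) - Complex.I * (s₀ : ℂ)))) ^ 2 * (q : ℂ)) ^ d := by
            ring
        _ = 1 ^ (l + k') * ((q : ℂ) ^ (2 * Complex.I * (s₀ : ℂ))) ^ d := by rw [h1, h2]
        _ = ((q : ℂ) ^ (2 * Complex.I * (s₀ : ℂ))) ^ d := by rw [one_pow, one_mul]
    calc (1 / (Fintype.card V : ℂ)) * ∑ ω ∈ nbFinset G (m + l + k' + d),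
          (starRingEnd ℂ)
              ((starRingEnd ℂ) ((q : ℂ) ^ (-(1/2 : ℂ) - Complex.I * (s₀ : ℂ))) ^ l *
               ((q : ℂ) ^ (-(1/2 : ℂ) - Complex.I * (s₀ : ℂ))) ^ (k' + d) *
               segEval m (m + l + k' + d) l (by omega) K ω) *
            ((starRingEnd ℂ) ((q : ℂ) ^ (-(1/2 : ℂ) - Complex.I * (s₀ : ℂ))) ^ (l + d) *
             ((q : ℂ) ^ (-(1/2 : ℂ) - Complex.I * (s₀ : ℂ))) ^ k' *
             segEval m (m + l + k' + d) (l + d) (by omega) K ω)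
        = (1 / (Fintype.card V : ℂ)) * ∑ ω ∈ nbFinset G (m + l + k' + d),
            (((q : ℂ) ^ (-(1/2 : ℂ) - Complex.I * (s₀ : ℂ))) ^ l *
              ((starRingEnd ℂ) ((q : ℂ) ^ (-(1/2 : ℂ) - Complex.I * (s₀ : ℂ)))) ^ (k' + d) *
              (((starRingEnd ℂ) ((q : ℂ) ^ (-(1/2 : ℂ) - Complex.I * (s₀ : ℂ)))) ^ (l + d) *
                ((q : ℂ) ^ (-(1/2 : ℂ) - Complex.I * (s₀ : ℂ))) ^ k')) *
              ((starRingEnd ℂ) (segEval m (m + l + k' + d) l (by omega) K ω) *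
                segEval m (m + l + k' + d) (l + d) (by omega) K ω) := by
          exact congrArg _ (Finset.sum_congr rfl (fun ω _ => hsummand _ _))
      _ = (1 / (Fintype.card V : ℂ)) *
            ((((q : ℂ) ^ (-(1/2 : ℂ) - Complex.I * (s₀ : ℂ))) ^ l *
              ((starRingEnd ℂ) ((q : ℂ) ^ (-(1/2 : ℂ) - Complex.I * (s₀ : ℂ)))) ^ (k' + d) *
              (((starRingEnd ℂ) ((q : ℂ) ^ (-(1/2 : ℂ) - Complex.I * (s₀ : ℂ)))) ^ (l + d) *
                ((q : ℂ) ^ (-(1/2 : ℂ) - Complex.I * (s₀ : ℂ))) ^ k')) *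
              ∑ ω ∈ nbFinset G (m + l + k' + d),
                (starRingEnd ℂ) (segEval m (m + l + k' + d) l (by omega) K ω) *
                  segEval m (m + l + k' + d) (l + d) (by omega) K ω) := by
          exact congrArg (fun t => 1 / (Fintype.card V : ℂ) * t) (Finset.mul_sum _ _ _).symm
      _ = (1 / (Fintype.card V : ℂ)) *
            ((((q : ℂ) ^ (-(1/2 : ℂ) - Complex.I * (s₀ : ℂ))) ^ l *
              ((starRingEnd ℂ) ((q : ℂ) ^ (-(1/2 : ℂ) - Complex.I * (s₀ : ℂ)))) ^ (k' + d) *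
              (((starRingEnd ℂ) ((q : ℂ) ^ (-(1/2 : ℂ) - Complex.I * (s₀ : ℂ)))) ^ (l + d) *
                ((q : ℂ) ^ (-(1/2 : ℂ) - Complex.I * (s₀ : ℂ))) ^ k')) *
              ∑ ω ∈ nbFinset G (l + (m + d) + k'),
                (starRingEnd ℂ) (K (fun i : Fin (m + 1) => ω ⟨l + i.val, by omega⟩)) *
                  K (fun i : Fin (m + 1) => ω ⟨l + d + i.val, by omega⟩)) := by
          exact congrArg _ (congrArg _ (nb_sum_cast
            (show l + (m + d) + k' = m + l + k' + d by omega)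
            (fun ω => (starRingEnd ℂ) (segEval m (m + l + k' + d) l (by omega) K ω) *
              segEval m (m + l + k' + d) (l + d) (by omega) K ω)))
      _ = (1 / (Fintype.card V : ℂ)) *
            ((((q : ℂ) ^ (-(1/2 : ℂ) - Complex.I * (s₀ : ℂ))) ^ l *
              ((starRingEnd ℂ) ((q : ℂ) ^ (-(1/2 : ℂ) - Complex.I * (s₀ : ℂ)))) ^ (k' + d) *
              (((starRingEnd ℂ) ((q : ℂ) ^ (-(1/2 : ℂ) - Complex.I * (s₀ : ℂ)))) ^ (l + d) *
                ((q : ℂ) ^ (-(1/2 : ℂ) - Complex.I * (s₀ : ℂ))) ^ k')) *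
              ∑ ω ∈ nbFinset G (l + (m + d) + k'),
                (starRingEnd ℂ) (K (fun i : Fin (m + 1) => ω ⟨l + i.val, by omega⟩)) *
                  K (fun i : Fin (m + 1) => ω ⟨l + (d + i.val), by omega⟩)) := by
          refine congrArg _ (congrArg _ (Finset.sum_congr rfl (fun ω _ => ?_)))
          refine congrArg _ (congrArg K (funext fun i => congrArg ω ?_))
          apply Fin.ext
          simp only
          omega
      _ = (1 / (Fintype.card V : ℂ)) *
            ((((q : ℂ) ^ (-(1/2 : ℂ) - Complex.I * (s₀ : ℂ))) ^ l *
              ((starRingEnd ℂ) ((q : ℂ) ^ (-(1/2 : ℂ) - Complex.I * (s₀ : ℂ)))) ^ (k' + d) *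
              (((starRingEnd ℂ) ((q : ℂ) ^ (-(1/2 : ℂ) - Complex.I * (s₀ : ℂ)))) ^ (l + d) *
                ((q : ℂ) ^ (-(1/2 : ℂ) - Complex.I * (s₀ : ℂ))) ^ k')) *
              (q ^ (l + k') • ∑ τ ∈ nbFinset G (m + d),
                (starRingEnd ℂ) (K (fun i : Fin (m + 1) => τ ⟨i.val, by omega⟩)) *
                  K (fun i : Fin (m + 1) => τ ⟨d + i.val, by omega⟩))) := by
          refine congrArg _ (congrArg _ ?_)
          exact sum_window hreg (by omega) l k'
            (fun τ : Fin (m + d + 1) → V =>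
              (starRingEnd ℂ) (K (fun i : Fin (m + 1) => τ ⟨i.val, by omega⟩)) *
                K (fun i : Fin (m + 1) => τ ⟨d + i.val, by omega⟩))
      _ = (1 / (Fintype.card V : ℂ)) *
            ((((q : ℂ) ^ (-(1/2 : ℂ) - Complex.I * (s₀ : ℂ))) ^ l *
              ((starRingEnd ℂ) ((q : ℂ) ^ (-(1/2 : ℂ) - Complex.I * (s₀ : ℂ)))) ^ (k' + d) *
              (((starRingEnd ℂ) ((q : ℂ) ^ (-(1/2 : ℂ) - Complex.I * (s₀ : ℂ)))) ^ (l + d) *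
                ((q : ℂ) ^ (-(1/2 : ℂ) - Complex.I * (s₀ : ℂ))) ^ k')) *
              (q ^ (l + k') • ((q : ℂ) ^ d * ∑ τ ∈ nbFinset G m,
                (starRingEnd ℂ) ((transferOp G q m)^[d] K τ) * K τ))) := by
          rw [sum_core hq hreg hm d K K]
      _ = ((q : ℂ) ^ (2 * Complex.I * (s₀ : ℂ))) ^ d *
            ((1 / (Fintype.card V : ℂ)) * ∑ ω ∈ nbFinset G m,
              (starRingEnd ℂ) ((transferOp G q m)^[d] K ω) * K ω) := by
          rw [nsmul_eq_mul, Nat.cast_pow, ← hC]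
          ring

end
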